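/- Let A ∈ ℝᴺˣᴺ be symmetric positive definite and let u_k be the iterates of the conjugate gradient method applied to Au = f with initial guess u_0. Then the error in the A-norm satisfies ‖u_k − u‖_A ≤ 2 ((√κ − 1)/(√κ + 1))^k ‖u_0 − u‖_A, where κ = λ_max(A)/λ_min(A) is the spectral condition number of A. -/

import Mathlib

open Matrix Polynomial Polynomial.Chebyshev

variable {N : ℕ}

variable {N : ℕ}

lemma CG_symm (A : Matrix (Fin N) (Fin N) ℝ) (hA : A.PosDef) (x y : Fin N → ℝ) :
    x ⬝ᵥ (A *ᵥ y) = y ⬝ᵥ (A *ᵥ x) := by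
  have h : Aᵀ = A := by
    ext i j; have := congrFun (congrFun hA.1.eq i) j; simpa using this
  rw [dotProduct_mulVec, ← mulVec_transpose, h, dotProduct_comm]

lemma CG_pos (A : Matrix (Fin N) (Fin N) ℝ) (hA : A.PosDef) (x : Fin N → ℝ) (hx : x ≠ 0) :
    0 < x ⬝ᵥ (A *ᵥ x) := by simpa using hA.dotProduct_mulVec_pos hx

lemma CG_nonneg (A : Matrix (Fin N) (Fin N) ℝ) (hA : A.PosDef) (x : Fin N → ℝ) :
    0 ≤ x ⬝ᵥ (A *ᵥ x) := by
  rcases eq_or_ne x 0 with rfl | hx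
  · simp
  · exact le_of_lt (CG_pos A hA x hx)

lemma CG_rr_ne (x : Fin N → ℝ) (hx : x ≠ 0) : x ⬝ᵥ x ≠ 0 := by
  simpa [dotProduct_self_eq_zero] using hx

lemma CG_sum_mulVec {α : Type*} (s : Finset α) (M : α → Matrix (Fin N) (Fin N) ℝ) (v : Fin N → ℝ) :
    (∑ i ∈ s, M i) *ᵥ v = ∑ i ∈ s, (M i *ᵥ v) := by
  classical
  induction s using Finset.induction with
  | empty => simp
  | insert _ _ h ih => simp [Finset.sum_insert h, add_mulVec, ih]

lemma CG_dot_sum {α : Type*} (s : Finset α) (x : Fin N → ℝ) (v : α → Fin N → ℝ) :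
    x ⬝ᵥ (∑ i ∈ s, v i) = ∑ i ∈ s, x ⬝ᵥ v i := by
  classical
  induction s using Finset.induction with
  | empty => simp
  | insert _ _ h ih => simp [Finset.sum_insert h, dotProduct_add, ih]

lemma CG_pow_mulVec_eig (A : Matrix (Fin N) (Fin N) ℝ) (v : Fin N → ℝ) (μ : ℝ)
    (hv : A *ᵥ v = μ • v) (m : ℕ) : (A^m) *ᵥ v = μ^m • v := by
  induction m with
  | zero => simp
  | succ m ihm =>
    rw [pow_succ, ← mulVec_mulVec, hv, mulVec_smul, ihm, smul_smul, pow_succ, mul_comm]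

lemma CG_aeval_mulVec_eig (A : Matrix (Fin N) (Fin N) ℝ) (v : Fin N → ℝ) (μ : ℝ)
    (hv : A *ᵥ v = μ • v) (p : ℝ[X]) : (aeval A p) *ᵥ v = p.eval μ • v := by
  induction p using Polynomial.induction_on' with
  | add p q hp hq => simp [add_mulVec, hp, hq, add_smul]
  | monomial n c =>
    simp only [aeval_monomial, eval_monomial]
    rw [show (algebraMap ℝ (Matrix (Fin N) (Fin N) ℝ)) c * A^n = c • A^n by
      simp [Algebra.smul_def]]
    rw [smul_mulVec, CG_pow_mulVec_eig A v μ hv n, smul_smul]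

lemma CG_aeval_mulVec_sum (A : Matrix (Fin N) (Fin N) ℝ) (v : Fin N → ℝ) (p : ℝ[X]) (n : ℕ)
    (hn : p.natDegree < n) :
    (aeval A p) *ᵥ v = ∑ i ∈ Finset.range n, p.coeff i • ((A^i) *ᵥ v) := by
  rw [Polynomial.aeval_eq_sum_range' hn, CG_sum_mulVec]
  congr 1; ext i
  rw [smul_mulVec]

def CG_S (r : ℕ → Fin N → ℝ) (n : ℕ) : Set (Fin N → ℝ) := {x | ∃ j, j < n ∧ x = r j}

lemma CG_S_mono (r : ℕ → Fin N → ℝ) {m n : ℕ} (h : m ≤ n) : CG_S r m ⊆ CG_S r n := by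
  rintro x ⟨j, hj, rfl⟩; exact ⟨j, lt_of_lt_of_le hj h, rfl⟩

lemma CG_dot_span (w : Fin N → ℝ) (S : Set (Fin N → ℝ)) (h : ∀ s ∈ S, w ⬝ᵥ s = 0)
    (x : Fin N → ℝ) (hx : x ∈ Submodule.span ℝ S) : w ⬝ᵥ x = 0 := by
  induction hx using Submodule.span_induction with
  | mem s hs => exact h s hs
  | zero => simp
  | add a b _ _ ha hb => rw [dotProduct_add, ha, hb, add_zero]
  | smul c a _ ha => rw [dotProduct_smul, ha, smul_zero]

lemma CG_mulVec_span (A : Matrix (Fin N) (Fin N) ℝ) (S T : Set (Fin N → ℝ))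
    (h : ∀ s ∈ S, A *ᵥ s ∈ Submodule.span ℝ T) (x : Fin N → ℝ)
    (hx : x ∈ Submodule.span ℝ S) : A *ᵥ x ∈ Submodule.span ℝ T := by
  induction hx using Submodule.span_induction with
  | mem s hs => exact h s hs
  | zero => simp [Submodule.zero_mem]
  | add a b _ _ ha hb => rw [mulVec_add]; exact Submodule.add_mem _ ha hb
  | smul c a _ ha => rw [mulVec_smul]; exact Submodule.smul_mem _ _ ha

lemma CG_dv_mem_span (r dv : ℕ → Fin N → ℝ) (γ : ℕ → ℝ)
    (hd1 : dv 1 = r 0)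
    (hd : ∀ k, 2 ≤ k → dv k = r (k - 1) + γ k • dv (k - 1)) :
    ∀ n, 1 ≤ n → dv n ∈ Submodule.span ℝ (CG_S r n) := by
  intro n
  induction n with
  | zero => omega
  | succ m ih =>
    intro _
    rcases Nat.eq_or_lt_of_le (show 1 ≤ m + 1 from Nat.le_add_left 1 m) with h1 | h1
    · obtain rfl : m = 0 := by omega
      rw [hd1]
      exact Submodule.subset_span ⟨0, by omega, rfl⟩
    · have hm : 1 ≤ m := by omega
      have h2 := hd (m+1) (by omega)
      simp only [Nat.add_sub_cancel] at h2
      rw [h2]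
      refine Submodule.add_mem _ ?_ (Submodule.smul_mem _ _ ?_)
      · exact Submodule.subset_span ⟨m, by omega, rfl⟩
      · exact Submodule.span_mono (CG_S_mono r (by omega)) (ih hm)

lemma CG_main
    (A : Matrix (Fin N) (Fin N) ℝ) (hA : A.PosDef)
    (r dv : ℕ → Fin N → ℝ) (ω γ : ℕ → ℝ)
    (hd1 : dv 1 = r 0)
    (hω : ∀ k, 1 ≤ k → ω k = (r (k - 1) ⬝ᵥ r (k - 1)) / (dv k ⬝ᵥ (A *ᵥ dv k)))
    (hrk : ∀ k, 1 ≤ k → r k = r (k - 1) - ω k • (A *ᵥ dv k))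
    (hγ : ∀ k, 2 ≤ k → γ k = (r (k - 1) ⬝ᵥ r (k - 1)) / (r (k - 2) ⬝ᵥ r (k - 2)))
    (hd : ∀ k, 2 ≤ k → dv k = r (k - 1) + γ k • dv (k - 1)) :
    ∀ n, (∀ j, j < n → r j ≠ 0) →
      (∀ j, j < n → r n ⬝ᵥ r j = 0) ∧
      (∀ j, 1 ≤ j → j < n → dv n ⬝ᵥ (A *ᵥ dv j) = 0) ∧
      (1 ≤ n → dv n ⬝ᵥ r (n - 1) = r (n - 1) ⬝ᵥ r (n - 1) ∧
        ω n * (dv n ⬝ᵥ (A *ᵥ dv n)) = r (n - 1) ⬝ᵥ r (n - 1) ∧ ω n ≠ 0) := by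
  intro n
  induction n using Nat.strong_induction_on with
  | _ n IH =>
  match n with
  | 0 => exact fun _ => ⟨fun j hj => by omega, fun j hj1 hj2 => by omega, fun h => by omega⟩
  | (m+1) =>
  intro hr
  have hrm : r m ≠ 0 := hr m (by omega)
  have Pm := IH m (by omega) (fun j hj => hr j (by omega))
  -- A *ᵥ dv j expression, for 1 ≤ j ≤ m
  have hAdv : ∀ j, 1 ≤ j → j ≤ m → A *ᵥ dv j = (ω j)⁻¹ • (r (j-1) - r j) := by
    intro j hj1 hj2
    have hωj := (IH j (by omega) (fun t ht => hr t (by omega))).2.2 hj1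
    have h1 : ω j • (A *ᵥ dv j) = r (j-1) - r j := by
      rw [hrk j hj1]; abel
    rw [← h1, smul_smul, inv_mul_cancel₀ hωj.2.2, one_smul]
  -- dv (m+1) ⬝ᵥ r m
  have hdr : dv (m+1) ⬝ᵥ r m = r m ⬝ᵥ r m := by
    rcases Nat.eq_zero_or_pos m with rfl | hm
    · rw [hd1]
    · have h2 := hd (m+1) (by omega)
      simp only [Nat.add_sub_cancel] at h2
      have hspan : r m ⬝ᵥ dv m = 0 :=
        CG_dot_span (r m) (CG_S r m) (by rintro s ⟨j, hj, rfl⟩; exact Pm.1 j hj)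
          (dv m) (CG_dv_mem_span r dv γ hd1 hd m hm)
      rw [h2, add_dotProduct, smul_dotProduct, dotProduct_comm (dv m) (r m), hspan,
        smul_zero, add_zero]
  have hdvne : dv (m+1) ≠ 0 := by
    intro h
    rw [h, zero_dotProduct] at hdr
    exact CG_rr_ne (r m) hrm hdr.symm
  have hden : 0 < dv (m+1) ⬝ᵥ (A *ᵥ dv (m+1)) := CG_pos A hA _ hdvne
  have hωval : ω (m+1) = (r m ⬝ᵥ r m) / (dv (m+1) ⬝ᵥ (A *ᵥ dv (m+1))) := by
    have := hω (m+1) (by omega); simpa using this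
  have hωne : ω (m+1) ≠ 0 := by
    rw [hωval]; exact div_ne_zero (CG_rr_ne (r m) hrm) (ne_of_gt hden)
  have hωden : ω (m+1) * (dv (m+1) ⬝ᵥ (A *ᵥ dv (m+1))) = r m ⬝ᵥ r m := by
    rw [hωval]; field_simp
  -- c-component
  have hc : ∀ j, 1 ≤ j → j < m + 1 → dv (m+1) ⬝ᵥ (A *ᵥ dv j) = 0 := by
    intro j hj1 hj2
    have hm : 1 ≤ m := by omega
    have h2 := hd (m+1) (by omega)
    simp only [Nat.add_sub_cancel] at h2
    rcases Nat.eq_or_lt_of_le (Nat.lt_succ_iff.mp hj2) with rfl | hjm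
    · -- j = m
      have hωm := (IH j (by omega) (fun t ht => hr t (by omega))).2.2 hj1
      have hγval := hγ (j+1) (by omega)
      have e1 : j + 1 - 1 = j := by omega
      have e2 : j + 1 - 2 = j - 1 := by omega
      rw [e1, e2] at hγval
      have hrr1 : r (j-1) ⬝ᵥ r (j-1) ≠ 0 := CG_rr_ne _ (hr (j-1) (by omega))
      have hspan0 : r j ⬝ᵥ dv j = 0 :=
        CG_dot_span (r j) (CG_S r j) (by rintro s ⟨t, ht, rfl⟩; exact Pm.1 t ht)
          (dv j) (CG_dv_mem_span r dv γ hd1 hd j hj1)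
      simp only [h2, add_dotProduct, smul_dotProduct, hAdv j hj1 (le_refl j),
        dotProduct_smul, dotProduct_sub, smul_eq_mul]
      rw [Pm.1 (j-1) (by omega), hωm.1, dotProduct_comm (dv j) (r j), hspan0, hγval]
      field_simp
      ring
    · -- j < m
      rw [h2, add_dotProduct, smul_dotProduct, Pm.2.1 j hj1 hjm, smul_zero, add_zero,
        hAdv j hj1 (by omega), dotProduct_smul, dotProduct_sub,
        Pm.1 (j-1) (by omega), Pm.1 j hjm, sub_zero, smul_eq_mul, mul_zero]
  -- a-component
  have hrksimp : r (m+1) = r m - ω (m+1) • (A *ᵥ dv (m+1)) := by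
    have := hrk (m+1) (by omega); simpa using this
  have ha : ∀ j, j < m + 1 → r (m+1) ⬝ᵥ r j = 0 := by
    intro j hj
    rw [hrksimp, sub_dotProduct, smul_dotProduct, dotProduct_comm (A *ᵥ dv (m+1)) (r j),
      CG_symm A hA (r j) (dv (m+1))]
    rcases Nat.eq_or_lt_of_le (Nat.lt_succ_iff.mp hj) with rfl | hjm
    · -- j = m
      have key : dv (j+1) ⬝ᵥ (A *ᵥ r j) = dv (j+1) ⬝ᵥ (A *ᵥ dv (j+1)) := by
        rcases Nat.eq_zero_or_pos j with rfl | hjpos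
        · rw [hd1]
        · have h2 := hd (j+1) (by omega)
          simp only [Nat.add_sub_cancel] at h2
          have hrj : r j = dv (j+1) - γ (j+1) • dv j := by rw [h2]; abel
          rw [hrj, mulVec_sub, mulVec_smul, dotProduct_sub, dotProduct_smul,
            hc j hjpos (by omega), smul_zero, sub_zero]
      rw [key, smul_eq_mul, hωden, sub_self]
    · -- j < m
      have hm : 1 ≤ m := by omega
      have key : dv (m+1) ⬝ᵥ (A *ᵥ r j) = 0 := by
        rcases Nat.eq_zero_or_pos j with rfl | hjpos
        · rw [← hd1]; exact hc 1 (le_refl 1) (by omega)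
        · have h2 := hd (j+1) (by omega)
          simp only [Nat.add_sub_cancel] at h2
          have hrj : r j = dv (j+1) - γ (j+1) • dv j := by rw [h2]; abel
          rw [hrj, mulVec_sub, mulVec_smul, dotProduct_sub, dotProduct_smul,
            hc (j+1) (by omega) (by omega), hc j hjpos (by omega), smul_zero, sub_self]
      rw [key, Pm.1 j hjm, smul_eq_mul, mul_zero, sub_self]
  exact ⟨ha, hc, fun _ => by
    simp only [Nat.add_sub_cancel]
    exact ⟨hdr, hωden, hωne⟩⟩

section CGaux
variable (A : Matrix (Fin N) (Fin N) ℝ) (hA : A.PosDef)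
    (r dv : ℕ → Fin N → ℝ) (ω γ : ℕ → ℝ)
    (hd1 : dv 1 = r 0)
    (hω : ∀ k, 1 ≤ k → ω k = (r (k - 1) ⬝ᵥ r (k - 1)) / (dv k ⬝ᵥ (A *ᵥ dv k)))
    (hrk : ∀ k, 1 ≤ k → r k = r (k - 1) - ω k • (A *ᵥ dv k))
    (hγ : ∀ k, 2 ≤ k → γ k = (r (k - 1) ⬝ᵥ r (k - 1)) / (r (k - 2) ⬝ᵥ r (k - 2)))
    (hd : ∀ k, 2 ≤ k → dv k = r (k - 1) + γ k • dv (k - 1))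

include hA hd1 hω hrk hγ hd

lemma CG_Adv_eq : ∀ t, 1 ≤ t → (∀ s, s < t → r s ≠ 0) →
    A *ᵥ dv t = (ω t)⁻¹ • (r (t-1) - r t) ∧ ω t ≠ 0 := by
  intro t ht hrs
  have hωne := (CG_main A hA r dv ω γ hd1 hω hrk hγ hd t hrs).2.2 ht |>.2.2
  have h1 : ω t • (A *ᵥ dv t) = r (t-1) - r t := by rw [hrk t ht]; abel
  exact ⟨by rw [← h1, smul_smul, inv_mul_cancel₀ hωne, one_smul], hωne⟩

lemma CG_Ar_span : ∀ j, (∀ t, t < j + 1 → r t ≠ 0) →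
    A *ᵥ r j ∈ Submodule.span ℝ (CG_S r (j+2)) := by
  intro j hrs
  have mem : ∀ t, t ≤ j + 1 → r t ∈ Submodule.span ℝ (CG_S r (j+2)) :=
    fun t ht => Submodule.subset_span ⟨t, by omega, rfl⟩
  rcases Nat.eq_zero_or_pos j with rfl | hj
  · have h1 := CG_Adv_eq A hA r dv ω γ hd1 hω hrk hγ hd 1 le_rfl (fun s hs => hrs s (by omega))
    rw [← hd1, h1.1]
    exact Submodule.smul_mem _ _ (Submodule.sub_mem _ (mem 0 (by omega)) (mem 1 (by omega)))
  · have h2 := hd (j+1) (by omega)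
    simp only [Nat.add_sub_cancel] at h2
    have hrj : r j = dv (j+1) - γ (j+1) • dv j := by rw [h2]; abel
    have hj1 := CG_Adv_eq A hA r dv ω γ hd1 hω hrk hγ hd (j+1) (by omega)
      (fun s hs => hrs s (by omega))
    have hj0 := CG_Adv_eq A hA r dv ω γ hd1 hω hrk hγ hd j hj
      (fun s hs => hrs s (by omega))
    rw [hrj, mulVec_sub, mulVec_smul, hj1.1, hj0.1]
    simp only [Nat.add_sub_cancel]
    refine Submodule.sub_mem _ (Submodule.smul_mem _ _ ?_) (Submodule.smul_mem _ _ (Submodule.smul_mem _ _ ?_))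
    · exact Submodule.sub_mem _ (mem j (by omega)) (mem (j+1) (by omega))
    · exact Submodule.sub_mem _ (mem (j-1) (by omega)) (mem j (by omega))

lemma CG_krylov : ∀ k, (∀ t, t < k → r t ≠ 0) → ∀ i, i < k →
    (A^i) *ᵥ r 0 ∈ Submodule.span ℝ (CG_S r (i+1)) := by
  intro k hrs i
  induction i with
  | zero =>
    intro _
    rw [pow_zero, one_mulVec]
    exact Submodule.subset_span ⟨0, by omega, rfl⟩
  | succ i ih =>
    intro hik
    have h1 : (A^(i+1)) *ᵥ r 0 = A *ᵥ ((A^i) *ᵥ r 0) := by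
      rw [pow_succ', ← mulVec_mulVec]
    rw [h1]
    refine CG_mulVec_span A (CG_S r (i+1)) (CG_S r (i+2)) ?_ _ (ih (by omega))
    rintro s ⟨j, hj, rfl⟩
    refine Submodule.span_mono (CG_S_mono r (by omega : j + 2 ≤ i + 2)) ?_
    exact CG_Ar_span A hA r dv ω γ hd1 hω hrk hγ hd j (fun t ht => hrs t (by omega))

lemma CG_orth_final (k : ℕ) (hrs : ∀ t, t < k → r t ≠ 0) :
    (∀ j, 1 ≤ j → j ≤ k → r k ⬝ᵥ dv j = 0) ∧
    (∀ i, i < k → r k ⬝ᵥ ((A^i) *ᵥ r 0) = 0) := by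
  have hperp : ∀ s ∈ CG_S r k, r k ⬝ᵥ s = 0 := by
    rintro s ⟨j, hj, rfl⟩
    exact (CG_main A hA r dv ω γ hd1 hω hrk hγ hd k hrs).1 j hj
  constructor
  · intro j hj1 hjk
    exact CG_dot_span (r k) (CG_S r k) hperp (dv j)
      (Submodule.span_mono (CG_S_mono r hjk) (CG_dv_mem_span r dv γ hd1 hd j hj1))
  · intro i hik
    exact CG_dot_span (r k) (CG_S r k) hperp _
      (Submodule.span_mono (CG_S_mono r (by omega : i + 1 ≤ k))
        (CG_krylov A hA r dv ω γ hd1 hω hrk hγ hd k hrs i hik))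

variable (u : ℕ → Fin N → ℝ) (f xs : Fin N → ℝ)
    (hxs : A *ᵥ xs = f)
    (hr0 : r 0 = f - A *ᵥ u 0)
    (hu : ∀ k, 1 ≤ k → u k = u (k - 1) + ω k • dv k)

include hxs hr0 hu

lemma CG_invariant : ∀ n, r n = f - A *ᵥ u n := by
  intro n
  induction n with
  | zero => exact hr0
  | succ n ih =>
    have h1 := hrk (n+1) (by omega)
    have h2 := hu (n+1) (by omega)
    simp only [Nat.add_sub_cancel] at h1 h2
    rw [h1, ih, h2, mulVec_add, mulVec_smul]
    abel

lemma CG_Ae (n : ℕ) : A *ᵥ (u n - xs) = -(r n) := by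
  rw [mulVec_sub, hxs, CG_invariant A hA r dv ω γ hd1 hω hrk hγ hd u f xs hxs hr0 hu n]
  abel

lemma CG_diff : ∀ n, u n - u 0 = ∑ j ∈ Finset.range n, ω (j+1) • dv (j+1) := by
  intro n
  induction n with
  | zero => simp
  | succ n ih =>
    have h2 := hu (n+1) (by omega)
    simp only [Nat.add_sub_cancel] at h2
    rw [Finset.sum_range_succ, ← ih, h2]
    abel

lemma CG_optimal (k : ℕ) (hk : 1 ≤ k) (hrs : ∀ t, t < k → r t ≠ 0)
    (p : ℝ[X]) (hdeg : p.natDegree ≤ k) (hp0 : p.eval 0 = 1) :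
    (u k - xs) ⬝ᵥ (A *ᵥ (u k - xs)) ≤
      ((aeval A p) *ᵥ (u 0 - xs)) ⬝ᵥ (A *ᵥ ((aeval A p) *ᵥ (u 0 - xs))) := by
  set e0 := u 0 - xs with he0
  set ek := u k - xs with hek
  set w := (aeval A p) *ᵥ e0 with hw
  set z := w - ek with hz
  have horth := CG_orth_final A hA r dv ω γ hd1 hω hrk hγ hd k hrs
  -- r k ⟂ (ek - e0)
  have h1 : r k ⬝ᵥ (ek - e0) = 0 := by
    have : ek - e0 = u k - u 0 := by rw [hek, he0]; abel
    rw [this, CG_diff A hA r dv ω γ hd1 hω hrk hγ hd u f xs hxs hr0 hu k,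
      CG_dot_sum]
    refine Finset.sum_eq_zero (fun j hj => ?_)
    rw [dotProduct_smul, horth.1 (j+1) (by omega) (by
      simp only [Finset.mem_range] at hj; omega), smul_zero]
  -- r k ⟂ (w - e0)
  have h2 : r k ⬝ᵥ (w - e0) = 0 := by
    have hco : (p - C 1).coeff 0 = 0 := by
      rw [coeff_sub, coeff_zero_eq_eval_zero, hp0, coeff_C]
      simp
    obtain ⟨q, hq⟩ := (X_dvd_iff).mpr hco
    have hwe : w - e0 = -((aeval A q) *ᵥ r 0) := by
      have : w - e0 = (aeval A (p - C 1)) *ᵥ e0 := by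
        have haev : (aeval A) (p - C 1) = aeval A p - 1 := by simp
        rw [haev, sub_mulVec, one_mulVec]
      rw [this, hq, show (X : ℝ[X]) * q = q * X from mul_comm _ _, _root_.map_mul,
        aeval_X, ← mulVec_mulVec,
        CG_Ae A hA r dv ω γ hd1 hω hrk hγ hd u f xs hxs hr0 hu 0, mulVec_neg]
    rcases eq_or_ne q 0 with rfl | hq0
    · rw [hwe]; simp
    have hqdeg : q.natDegree < k := by
      have hX : (X : ℝ[X]) ≠ 0 := X_ne_zero
      have hmul : (p - C 1).natDegree = 1 + q.natDegree := by
        rw [hq, natDegree_mul hX hq0, natDegree_X]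
      have hle : (p - C 1).natDegree ≤ k := by
        refine le_trans (natDegree_sub_le _ _) ?_
        simp [natDegree_C, hdeg]
      omega
    rw [hwe, dotProduct_neg, CG_aeval_mulVec_sum A (r 0) q k hqdeg, CG_dot_sum]
    rw [Finset.sum_eq_zero (fun i hi => by
      rw [dotProduct_smul, horth.2 i (Finset.mem_range.mp hi), smul_zero]), neg_zero]
  have hkey : r k ⬝ᵥ z = 0 := by
    have : z = (w - e0) - (ek - e0) := by rw [hz]; abel
    rw [this, dotProduct_sub, h1, h2, sub_zero]
  have hzA : z ⬝ᵥ (A *ᵥ ek) = 0 := by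
    rw [CG_Ae A hA r dv ω γ hd1 hω hrk hγ hd u f xs hxs hr0 hu k, dotProduct_neg,
      dotProduct_comm, hkey, neg_zero]
  have hzA2 : ek ⬝ᵥ (A *ᵥ z) = 0 := by rw [CG_symm A hA]; exact hzA
  have hwz : w = ek + z := by rw [hz]; abel
  have hzz : 0 ≤ z ⬝ᵥ (A *ᵥ z) := CG_nonneg A hA z
  calc ek ⬝ᵥ (A *ᵥ ek) ≤ ek ⬝ᵥ (A *ᵥ ek) + z ⬝ᵥ (A *ᵥ z) := by linarith
    _ = w ⬝ᵥ (A *ᵥ w) := by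
        rw [hwz, mulVec_add, dotProduct_add, add_dotProduct, add_dotProduct, hzA, hzA2]
        ring

end CGaux

lemma CG_mulVec_sum {α : Type*} (s : Finset α) (A : Matrix (Fin N) (Fin N) ℝ) (v : α → Fin N → ℝ) :
    A *ᵥ (∑ i ∈ s, v i) = ∑ i ∈ s, A *ᵥ v i := by
  classical
  induction s using Finset.induction with
  | empty => simp
  | insert _ _ h ih => simp [Finset.sum_insert h, mulVec_add, ih]

lemma CG_spec_bound (A : Matrix (Fin N) (Fin N) ℝ) (hA : A.PosDef)
    (p : ℝ[X]) (x : Fin N → ℝ) (M : ℝ)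
    (hM : ∀ i, |p.eval (hA.1.eigenvalues i)| ≤ M) :
    ((aeval A p) *ᵥ x) ⬝ᵥ (A *ᵥ ((aeval A p) *ᵥ x)) ≤ M^2 * (x ⬝ᵥ (A *ᵥ x)) := by
  classical
  set V : Fin N → Fin N → ℝ := fun i => (hA.1.eigenvectorBasis i : Fin N → ℝ) with hV
  set μ : Fin N → ℝ := hA.1.eigenvalues with hμ
  have hVorth : ∀ i j, V i ⬝ᵥ V j = if i = j then 1 else 0 := by
    intro i j
    have h2 := orthonormal_iff_ite.mp hA.1.eigenvectorBasis.orthonormal i j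
    rw [← h2]
    simp [EuclideanSpace.inner_eq_star_dotProduct]
    exact dotProduct_comm _ _
  have hAV : ∀ i, A *ᵥ V i = μ i • V i := fun i => hA.1.mulVec_eigenvectorBasis i
  have hμpos : ∀ i, 0 < μ i := fun i => hA.eigenvalues_pos i
  -- dot of sum-of-basis with single basis vector
  have hdotV : ∀ (b : Fin N → ℝ) (j : Fin N), (∑ i, b i • V i) ⬝ᵥ V j = b j := by
    intro b j
    rw [dotProduct_comm, CG_dot_sum]
    have : ∀ i, V j ⬝ᵥ (b i • V i) = b i * (if j = i then 1 else 0) := by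
      intro i; rw [dotProduct_smul, hVorth j i, smul_eq_mul]
    simp only [this]
    simp [Finset.sum_ite_eq]
  -- quadratic form
  have qf : ∀ b : Fin N → ℝ,
      (∑ i, b i • V i) ⬝ᵥ (A *ᵥ (∑ i, b i • V i)) = ∑ i, μ i * (b i)^2 := by
    intro b
    rw [CG_mulVec_sum, CG_dot_sum]
    refine Finset.sum_congr rfl (fun j _ => ?_)
    rw [mulVec_smul, hAV j, smul_smul, dotProduct_smul, hdotV b j, smul_eq_mul]
    ring
  set c : Fin N → ℝ := fun i => V i ⬝ᵥ x with hc
  have hx : x = ∑ i, c i • V i := by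
    have h := (hA.1.eigenvectorBasis.sum_repr' (WithLp.toLp 2 x : EuclideanSpace ℝ (Fin N))).symm
    have h2 : ∀ i : Fin N, (inner ℝ (hA.1.eigenvectorBasis i) (WithLp.toLp 2 x : EuclideanSpace ℝ (Fin N)) : ℝ) = c i := by
      intro i
      simp [EuclideanSpace.inner_eq_star_dotProduct]
      exact dotProduct_comm _ _
    simp only [h2] at h
    have h3 := congrArg (WithLp.ofLp (p := 2)) h
    simpa [hV] using h3
  have hw : (aeval A p) *ᵥ x = ∑ i, (c i * p.eval (μ i)) • V i := by
    conv_lhs => rw [hx]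
    rw [CG_mulVec_sum]
    refine Finset.sum_congr rfl (fun j _ => ?_)
    rw [mulVec_smul, CG_aeval_mulVec_eig A (V j) (μ j) (hAV j) p, smul_smul]
  rw [hw, qf]
  conv_rhs => rw [hx]
  rw [qf, Finset.mul_sum]
  refine Finset.sum_le_sum (fun i _ => ?_)
  have h1 : (p.eval (μ i))^2 ≤ M^2 := by
    rw [← sq_abs]
    have hM0 : 0 ≤ M := le_trans (abs_nonneg _) (hM i)
    exact pow_le_pow_left₀ (abs_nonneg _) (hM i) 2
  calc μ i * (c i * p.eval (μ i))^2 = (μ i * (c i)^2) * (p.eval (μ i))^2 := by ring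
    _ ≤ (μ i * (c i)^2) * M^2 := by
        exact mul_le_mul_of_nonneg_left h1 (mul_nonneg (le_of_lt (hμpos i)) (sq_nonneg _))
    _ = M^2 * (μ i * (c i)^2) := by ring


lemma CG_cheb_le_one (k : ℕ) (y : ℝ) (hy1 : -1 ≤ y) (hy2 : y ≤ 1) : |(T ℝ (k:ℤ)).eval y| ≤ 1 := by
  have : y = Real.cos (Real.arccos y) := (Real.cos_arccos hy1 hy2).symm
  rw [this, T_real_cos]
  exact Real.abs_cos_le_one _

lemma CG_cheb_cosh (σ : ℝ) (hσ : σ ≠ 0) : ∀ k : ℕ,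
    (T ℝ (k:ℤ)).eval ((σ + σ⁻¹)/2) = (σ^k + σ⁻¹^k)/2 ∧
    (T ℝ ((k:ℤ)+1)).eval ((σ + σ⁻¹)/2) = (σ^(k+1) + σ⁻¹^(k+1))/2 := by
  intro k
  induction k with
  | zero =>
    constructor
    · simp [T_zero]
    · simp only [Nat.cast_zero, zero_add, T_one, eval_X, pow_one]
  | succ n ih =>
    constructor
    · rw [Nat.cast_succ]; exact ih.2
    · have h := T_add_two ℝ (n:ℤ)
      have h2 := congrArg (Polynomial.eval ((σ + σ⁻¹)/2)) h
      simp only [eval_sub, eval_mul, eval_ofNat, eval_X] at h2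
      rw [show ((n+1:ℕ):ℤ)+1 = (n:ℤ)+2 by push_cast; ring, h2, ih.1, ih.2]
      linear_combination ((σ^n + σ⁻¹^n)/2) * mul_inv_cancel₀ hσ

lemma CG_cheb_deg (k : ℕ) : ((T ℝ (k:ℤ)).natDegree ≤ k) ∧ ((T ℝ ((k:ℤ)+1)).natDegree ≤ k+1) := by
  induction k with
  | zero => constructor <;> simp [T_zero, T_one]
  | succ n ih =>
    constructor
    · rw [Nat.cast_succ]; exact ih.2
    · rw [show ((n+1:ℕ):ℤ)+1 = (n:ℤ)+2 by push_cast; ring, T_add_two]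
      refine le_trans (natDegree_sub_le _ _) ?_
      simp only [max_le_iff]
      refine ⟨le_trans (natDegree_mul_le) ?_, by omega⟩
      have h1 : (2 * X : ℝ[X]).natDegree ≤ 1 := by
        refine le_trans (natDegree_mul_le) ?_; simp
      omega

lemma CG_cheb_poly (a b : ℝ) (ha : 0 < a) (hab : a < b) (k : ℕ) :
    ∃ p : ℝ[X], p.natDegree ≤ k ∧ p.eval 0 = 1 ∧
      ∀ μ, a ≤ μ → μ ≤ b →
        |p.eval μ| ≤ 2 * ((Real.sqrt (b/a) - 1)/(Real.sqrt (b/a) + 1))^k := by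
  have hba : 0 < b - a := by linarith
  have hκ : 1 < b / a := (one_lt_div ha).mpr hab
  set s := Real.sqrt (b/a) with hs
  have hs1 : 1 < s := by
    rw [hs, show (1:ℝ) = Real.sqrt 1 by simp]
    exact Real.sqrt_lt_sqrt (by norm_num) hκ
  have hssq : s^2 = b/a := Real.sq_sqrt (by positivity)
  set σ := (s+1)/(s-1) with hσdef
  have hσ1 : 1 < σ := by
    rw [hσdef, lt_div_iff₀ (by linarith)]
    linarith
  have hσ0 : (0:ℝ) < σ := by linarith
  set x0 := (b+a)/(b-a) with hx0
  have hclaim : (σ + σ⁻¹)/2 = x0 := by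
    rw [hσdef, hx0, inv_div]
    have h1 : s - 1 ≠ 0 := by linarith
    have h2 : s + 1 ≠ 0 := by linarith
    have h3 : b / a = s^2 := hssq.symm
    have h4 : b * a * a⁻¹ = b := by field_simp
    field_simp
    linear_combination (-4*a) * hssq + (-4) * h4
  set t0 := (T ℝ (k:ℤ)).eval x0 with ht0
  have ht0val : t0 = (σ^k + σ⁻¹^k)/2 := by
    rw [ht0, ← hclaim, (CG_cheb_cosh σ (ne_of_gt hσ0) k).1]
  have hσk : 0 < σ^k := pow_pos hσ0 k
  have hσik : 0 < σ⁻¹^k := pow_pos (by positivity) k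
  have ht0pos : 0 < t0 := by rw [ht0val]; positivity
  have ht0ge : σ^k/2 ≤ t0 := by rw [ht0val]; linarith
  set ℓ : ℝ[X] := C x0 - C (2/(b-a)) * X with hℓ
  refine ⟨C t0⁻¹ * ((T ℝ (k:ℤ)).comp ℓ), ?_, ?_, ?_⟩
  · refine le_trans (natDegree_mul_le) ?_
    rw [natDegree_C, zero_add]
    refine le_trans (natDegree_comp_le) ?_
    have hℓdeg : ℓ.natDegree ≤ 1 := by
      rw [hℓ]
      refine le_trans (natDegree_sub_le _ _) ?_
      simp only [max_le_iff, natDegree_C]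
      exact ⟨by omega, le_trans natDegree_mul_le (by simp)⟩
    calc (T ℝ (k:ℤ)).natDegree * ℓ.natDegree ≤ k * 1 :=
          Nat.mul_le_mul (CG_cheb_deg k).1 hℓdeg
      _ = k := by omega
  · rw [eval_mul, eval_C, eval_comp]
    have : ℓ.eval 0 = x0 := by rw [hℓ]; simp
    rw [this, ← ht0]
    exact inv_mul_cancel₀ (ne_of_gt ht0pos)
  · intro μ hμ1 hμ2
    rw [eval_mul, eval_C, eval_comp, abs_mul, abs_inv, abs_of_pos ht0pos]
    have hy : ℓ.eval μ = (b + a - 2*μ)/(b-a) := by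
      rw [hℓ]; simp only [eval_sub, eval_mul, eval_C, eval_X, hx0]
      field_simp
    have hy1 : -1 ≤ ℓ.eval μ := by
      rw [hy, le_div_iff₀ hba]; linarith
    have hy2 : ℓ.eval μ ≤ 1 := by
      rw [hy, div_le_one hba]; linarith
    have hT := CG_cheb_le_one k (ℓ.eval μ) hy1 hy2
    have hρ : (s - 1)/(s + 1) = σ⁻¹ := by
      rw [hσdef, inv_div]
    rw [hρ]
    calc t0⁻¹ * |(T ℝ (k:ℤ)).eval (ℓ.eval μ)| ≤ t0⁻¹ * 1 :=
          mul_le_mul_of_nonneg_left hT (by positivity)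
      _ = t0⁻¹ := mul_one _
      _ ≤ 2 * σ⁻¹^k := by
          rw [inv_pow]
          have h2 := one_div_le_one_div_of_le (by positivity : (0:ℝ) < σ^k/2) ht0ge
          rw [one_div, one_div, inv_div] at h2
          calc t0⁻¹ ≤ 2/σ^k := h2
            _ = 2 * (σ^k)⁻¹ := by rw [div_eq_mul_inv]


/-- classical convergence estimate for the conjugate gradient method:
for `A` symmetric positive definite, the CG iterates satisfy
`‖u_k - u‖_A ≤ 2 ((√κ - 1)/(√κ + 1))^k ‖u_0 - u‖_A`, where
`κ = λ_max(A)/λ_min(A)`. The iterates are described by the standard recurrences. -/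
theorem conjugate_gradient_convergence
    (N : ℕ) (hN : 0 < N)
    (A : Matrix (Fin N) (Fin N) ℝ) (hA : A.PosDef)
    (f xs : Fin N → ℝ) (hxs : A *ᵥ xs = f)
    (u r dv : ℕ → Fin N → ℝ) (ω γ : ℕ → ℝ)
    (hr0 : r 0 = f - A *ᵥ u 0)
    (hd1 : dv 1 = r 0)
    (hω : ∀ k, 1 ≤ k → ω k = (r (k - 1) ⬝ᵥ r (k - 1)) / (dv k ⬝ᵥ (A *ᵥ dv k)))
    (hu : ∀ k, 1 ≤ k → u k = u (k - 1) + ω k • dv k)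
    (hrk : ∀ k, 1 ≤ k → r k = r (k - 1) - ω k • (A *ᵥ dv k))
    (hγ : ∀ k, 2 ≤ k → γ k = (r (k - 1) ⬝ᵥ r (k - 1)) / (r (k - 2) ⬝ᵥ r (k - 2)))
    (hd : ∀ k, 2 ≤ k → dv k = r (k - 1) + γ k • dv (k - 1))
    (κ : ℝ)
    (hκ : κ = (Finset.univ.sup' ⟨⟨0, hN⟩, Finset.mem_univ _⟩ hA.1.eigenvalues) /
      (Finset.univ.inf' ⟨⟨0, hN⟩, Finset.mem_univ _⟩ hA.1.eigenvalues)) :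
    ∀ k : ℕ, Real.sqrt ((u k - xs) ⬝ᵥ (A *ᵥ (u k - xs))) ≤
      2 * ((Real.sqrt κ - 1) / (Real.sqrt κ + 1)) ^ k *
        Real.sqrt ((u 0 - xs) ⬝ᵥ (A *ᵥ (u 0 - xs))) := by
  intro k
  set ha' : Finset.Nonempty (Finset.univ : Finset (Fin N)) := ⟨⟨0, hN⟩, Finset.mem_univ _⟩ with hha
  set b : ℝ := Finset.univ.sup' ha' hA.1.eigenvalues with hb
  set a : ℝ := Finset.univ.inf' ha' hA.1.eigenvalues with haa
  have hbounds : ∀ i, a ≤ hA.1.eigenvalues i ∧ hA.1.eigenvalues i ≤ b := fun i =>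
    ⟨Finset.inf'_le _ (Finset.mem_univ i), Finset.le_sup' _ (Finset.mem_univ i)⟩
  have hapos : 0 < a := by
    obtain ⟨i0, _, hi0⟩ := Finset.exists_mem_eq_inf' ha' hA.1.eigenvalues
    rw [haa, hi0]
    exact hA.eigenvalues_pos i0
  have hab : a ≤ b := le_trans (hbounds ⟨0, hN⟩).1 (hbounds ⟨0, hN⟩).2
  have hκ1 : 1 ≤ κ := by
    rw [hκ]
    exact (one_le_div hapos).mpr hab
  have hsκ : 1 ≤ Real.sqrt κ := by
    rw [show (1:ℝ) = Real.sqrt 1 by simp]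
    exact Real.sqrt_le_sqrt hκ1
  set ρ : ℝ := (Real.sqrt κ - 1) / (Real.sqrt κ + 1) with hρ
  have hρ0 : 0 ≤ ρ := div_nonneg (by linarith) (by linarith)
  have hE0 : (0:ℝ) ≤ Real.sqrt ((u 0 - xs) ⬝ᵥ (A *ᵥ (u 0 - xs))) := Real.sqrt_nonneg _
  have hRHS0 : 0 ≤ 2 * ρ ^ k * Real.sqrt ((u 0 - xs) ⬝ᵥ (A *ᵥ (u 0 - xs))) := by
    have := pow_nonneg hρ0 k
    positivity
  rcases Nat.eq_zero_or_pos k with rfl | hk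
  · simp only [pow_zero, mul_one]
    nlinarith [Real.sqrt_nonneg ((u 0 - xs) ⬝ᵥ (A *ᵥ (u 0 - xs)))]
  by_cases hbd : ∀ t, t < k → r t ≠ 0
  case neg =>
    -- breakdown: some residual vanished, iterate is exact
    push_neg at hbd
    obtain ⟨m, hmk, hm0⟩ := hbd
    have hzero : ∀ n, m ≤ n → r n = 0 := by
      intro n hn
      induction n, hn using Nat.le_induction with
      | base => exact hm0
      | succ n hmn ih =>
        have hωz : ω (n+1) = 0 := by
          rw [hω (n+1) (by omega)]
          simp [ih]
        rw [hrk (n+1) (by omega)]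
        simp [hωz, ih]
    have hrk0 : r k = 0 := hzero k (by omega)
    have hek : u k - xs = 0 := by
      have hAe := CG_Ae A hA r dv ω γ hd1 hω hrk hγ hd u f xs hxs hr0 hu k
      rw [hrk0, neg_zero] at hAe
      by_contra hne
      have := CG_pos A hA _ hne
      rw [hAe] at this
      simp at this
    rw [hek]
    simpa using hRHS0
  case pos =>
    -- main case
    have key : ∀ p : ℝ[X], p.natDegree ≤ k → p.eval 0 = 1 →
        ∀ M, 0 ≤ M → (∀ i, |p.eval (hA.1.eigenvalues i)| ≤ M) →
        Real.sqrt ((u k - xs) ⬝ᵥ (A *ᵥ (u k - xs))) ≤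
          M * Real.sqrt ((u 0 - xs) ⬝ᵥ (A *ᵥ (u 0 - xs))) := by
      intro p hdeg hp0 M hM0 hM
      have h1 := CG_optimal A hA r dv ω γ hd1 hω hrk hγ hd u f xs hxs hr0 hu
        k hk hbd p hdeg hp0
      have h2 := CG_spec_bound A hA p (u 0 - xs) M hM
      have h3 : (u k - xs) ⬝ᵥ (A *ᵥ (u k - xs)) ≤ M^2 * ((u 0 - xs) ⬝ᵥ (A *ᵥ (u 0 - xs))) :=
        le_trans h1 h2
      calc Real.sqrt ((u k - xs) ⬝ᵥ (A *ᵥ (u k - xs)))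
          ≤ Real.sqrt (M^2 * ((u 0 - xs) ⬝ᵥ (A *ᵥ (u 0 - xs)))) := Real.sqrt_le_sqrt h3
        _ = M * Real.sqrt ((u 0 - xs) ⬝ᵥ (A *ᵥ (u 0 - xs))) := by
            rw [Real.sqrt_mul (sq_nonneg M), Real.sqrt_sq hM0]
    rcases eq_or_lt_of_le hab with heq | hlt
    · -- a = b : all eigenvalues equal, use linear polynomial
      have hρval : ρ = 0 := by
        have : κ = 1 := by rw [hκ, ← heq, div_self (ne_of_gt hapos)]
        rw [hρ, this]
        simp
      set p : ℝ[X] := C 1 - C a⁻¹ * X with hp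
      have hdeg : p.natDegree ≤ k := by
        rw [hp]
        refine le_trans (natDegree_sub_le _ _) ?_
        simp only [max_le_iff, natDegree_C]
        exact ⟨by omega, le_trans natDegree_mul_le (by simp; omega)⟩
      have hp0 : p.eval 0 = 1 := by rw [hp]; simp
      have hM : ∀ i, |p.eval (hA.1.eigenvalues i)| ≤ 0 := by
        intro i
        have h1 := (hbounds i).1
        have h2 := (hbounds i).2
        rw [← heq] at h2
        have : hA.1.eigenvalues i = a := le_antisymm h2 h1
        rw [hp, this]
        simp [inv_mul_cancel₀ (ne_of_gt hapos)]
      have := key p hdeg hp0 0 le_rfl hM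
      rw [zero_mul] at this
      exact le_trans this hRHS0
    · -- a < b : Chebyshev polynomial
      obtain ⟨p, hdeg, hp0, hbound⟩ := CG_cheb_poly a b hapos hlt k
      have hM : ∀ i, |p.eval (hA.1.eigenvalues i)| ≤ 2 * ρ ^ k := by
        intro i
        have h := hbound (hA.1.eigenvalues i) (hbounds i).1 (hbounds i).2
        rwa [← hκ] at h
      have hM0 : 0 ≤ 2 * ρ ^ k := by
        have := pow_nonneg hρ0 k
        linarith
      have := key p hdeg hp0 (2 * ρ ^ k) hM0 hM
      exact this
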